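/- Let d, w₁, w₂, w₃ be odd positive integers, χ : ℤ → ℂ be d-periodic, ξ ∈ ℂ with appropriate nonvanishing conditions. Then for all n ≥ 0 and y₁ ∈ ℂ, the three expressions ∑_{k+l+m=n} (n!/(k!l!m!)) E_{k,χ,ξ^{w₂w₃}}(w₁y₁) T_l(w₂d−1;χ,ξ^{w₁w₃}) T_m(w₃d−1;χ,ξ^{w₁w₂}) w₁^{l+m} w₂^{k+m} w₃^{k+l}, its cyclic shift with (w₁,w₂,w₃) → (w₂,w₃,w₁), and its cyclic shift with (w₁,w₂,w₃) → (w₃,w₁,w₂) are all equal. -/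

import Mathlib

open Finset PowerSeries

/-- Generating function of the generalized twisted Euler polynomials:
`2 e^{xt} (ξ^d e^{dt}+1)⁻¹ ∑_{a=0}^{d-1} (-1)^a χ(a) ξ^a e^{at}` in `ℂ[[t]]`. -/
noncomputable def Egf (d : ℕ) (χ : ℤ → ℂ) (ξ x : ℂ) : PowerSeries ℂ :=
  2 * rescale x (exp ℂ) * (ξ ^ d • rescale (d : ℂ) (exp ℂ) + 1)⁻¹ *
    ∑ a ∈ Finset.range d, ((-1 : ℂ) ^ a * χ a * ξ ^ a) • rescale (a : ℂ) (exp ℂ)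

/-- The generalized twisted Euler polynomial `E_{n,χ,ξ}(x)`. -/
noncomputable def E (d : ℕ) (χ : ℤ → ℂ) (ξ x : ℂ) (n : ℕ) : ℂ :=
  (n.factorial : ℂ) * PowerSeries.coeff n (Egf d χ ξ x)

/-- The alternating generalized twisted power sum `T_k(m; χ, ξ)`. -/
noncomputable def T (m : ℕ) (χ : ℤ → ℂ) (ξ : ℂ) (k : ℕ) : ℂ :=
  ∑ a ∈ Finset.range (m + 1), (-1 : ℂ) ^ a * χ a * ξ ^ a * (a : ℂ) ^ k


/-- The triple sum of Theorem 4, as a function of `(w₁, w₂, w₃)`. -/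
noncomputable def S (d : ℕ) (χ : ℤ → ℂ) (ξ : ℂ) (n : ℕ) (y₁ : ℂ)
    (u v w : ℕ) : ℂ :=
  ∑ k ∈ Finset.range (n + 1), ∑ l ∈ Finset.range (n + 1 - k),
    (n.factorial : ℂ) / ((k.factorial : ℂ) * (l.factorial : ℂ) * ((n - k - l).factorial : ℂ)) *
      E d χ (ξ ^ (v * w)) ((u : ℂ) * y₁) k *
      T (v * d - 1) χ (ξ ^ (u * w)) l *
      T (w * d - 1) χ (ξ ^ (u * v)) (n - k - l) *
      (u : ℂ) ^ (l + (n - k - l)) * (v : ℂ) ^ (k + (n - k - l)) * (w : ℂ) ^ (k + l)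

noncomputable def Gd (ξ : ℂ) (m : ℕ) : PowerSeries ℂ :=
  (ξ ^ m) • rescale ((m : ℕ) : ℂ) (exp ℂ) + 1

noncomputable def Sd (d : ℕ) (χ : ℤ → ℂ) (ξ : ℂ) (m : ℕ) : PowerSeries ℂ :=
  ∑ b ∈ Finset.range d, ((-1 : ℂ) ^ b * χ b * ξ ^ (b * m)) • rescale (((b * m : ℕ)) : ℂ) (exp ℂ)

noncomputable def Geo (ξ : ℂ) (v M : ℕ) : PowerSeries ℂ :=
  ∑ c ∈ Finset.range v, ((-1 : ℂ) ^ c * ξ ^ (M * c)) • rescale (((M * c : ℕ)) : ℂ) (exp ℂ)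

lemma rescale_smul (a c : ℂ) (f : PowerSeries ℂ) :
    rescale a (c • f) = c • rescale a f := by
  ext n
  simp [coeff_rescale]
  ring

lemma constantCoeff_rescale (a : ℂ) (f : PowerSeries ℂ) :
    constantCoeff (rescale a f) = constantCoeff f := by
  have := coeff_rescale f a 0
  simp only [coeff_zero_eq_constantCoeff] at this
  simpa using this

lemma rescale_inv (a : ℂ) (f : PowerSeries ℂ) (h : constantCoeff f ≠ 0) :
    rescale a f⁻¹ = (rescale a f)⁻¹ := by
  rw [eq_comm, PowerSeries.inv_eq_iff_mul_eq_one, ← map_mul,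
    PowerSeries.inv_mul_cancel _ h, map_one]
  rw [constantCoeff_rescale]; exact h

lemma rescale_exp_mul (a b : ℂ) :
    rescale b (rescale a (exp ℂ)) = rescale (a * b) (exp ℂ) :=
  rescale_rescale _ a b

lemma rescale_exp_pow (m : ℂ) (c : ℕ) :
    (rescale m (exp ℂ)) ^ c = rescale ((c : ℂ) * m) (exp ℂ) := by
  rw [← map_pow, exp_pow_eq_rescale_exp, rescale_rescale]

lemma zpow (ξ : ℂ) (m c : ℕ) :
    ((ξ ^ m) • rescale ((m : ℕ) : ℂ) (exp ℂ)) ^ c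
      = (ξ ^ (m * c)) • rescale (((m * c : ℕ)) : ℂ) (exp ℂ) := by
  rw [smul_pow, rescale_exp_pow, ← pow_mul]
  push_cast
  ring_nf

lemma Gd_mul_Geo (ξ : ℂ) (m v : ℕ) (hv : Odd v) :
    Gd ξ m * Geo ξ v m = Gd ξ (m * v) := by
  set z : PowerSeries ℂ := (ξ ^ m) • rescale ((m : ℕ) : ℂ) (exp ℂ) with hz
  have hgeo : Geo ξ v m = ∑ c ∈ Finset.range v, (-z) ^ c := by
    unfold Geo
    refine Finset.sum_congr rfl fun c _ => ?_
    rw [hz, show (-z) ^ c = (-1 : PowerSeries ℂ) ^ c * z ^ c by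
      rw [← neg_one_mul, mul_pow],
      show (-1 : PowerSeries ℂ) = ((-1 : ℂ)) • 1 by simp,
      smul_pow, one_pow, smul_mul_assoc, one_mul, hz, zpow, smul_smul]
  have h1 : (∑ c ∈ Finset.range v, (-z) ^ c) * (-z - 1) = (-z) ^ v - 1 :=
    geom_sum_mul (-z) v
  have h2 : (-z) ^ v = -(z ^ v) := hv.neg_pow z
  have : Gd ξ m * Geo ξ v m = -((∑ c ∈ Finset.range v, (-z) ^ c) * (-z - 1)) := by
    rw [hgeo]; unfold Gd; rw [← hz]; ring
  rw [this, h1, h2]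
  unfold Gd
  rw [← zpow, ← hz]
  ring

lemma sum_range_mul_split {M : Type*} [AddCommMonoid M] (f : ℕ → M) (v d : ℕ) :
    ∑ a ∈ Finset.range (v * d), f a
      = ∑ c ∈ Finset.range v, ∑ b ∈ Finset.range d, f (c * d + b) := by
  induction v with
  | zero => simp
  | succ v ih =>
    rw [Finset.sum_range_succ, ← ih, Nat.succ_mul, Finset.sum_range_add]

noncomputable def Tgf (m : ℕ) (χ : ℤ → ℂ) (ζ : ℂ) : PowerSeries ℂ :=
  ∑ a ∈ Finset.range (m + 1), ((-1 : ℂ) ^ a * χ a * ζ ^ a) • rescale ((a : ℕ) : ℂ) (exp ℂ)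

lemma rescale_Tgf (d : ℕ) (χ : ℤ → ℂ) (ξ : ℂ) (hd : Odd d) (hd0 : 0 < d)
    (hχ : Function.Periodic χ (d : ℤ)) (m v : ℕ) (hv0 : 0 < v) :
    rescale ((m : ℕ) : ℂ) (Tgf (v * d - 1) χ (ξ ^ m))
      = Sd d χ ξ m * Geo ξ v (d * m) := by
  have hvd : v * d - 1 + 1 = v * d := Nat.succ_pred_eq_of_pos (Nat.mul_pos hv0 hd0)
  unfold Tgf
  rw [map_sum, hvd, sum_range_mul_split]
  unfold Sd Geo
  rw [Finset.sum_mul_sum]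
  rw [Finset.sum_comm]
  refine Finset.sum_congr rfl fun c hc => Finset.sum_congr rfl fun b hb => ?_
  rw [rescale_smul, rescale_rescale]
  have hχ' : χ ((b * d + c : ℕ) : ℤ) = χ (c : ℤ) := by
    push_cast
    rw [add_comm]
    exact (hχ.nat_mul b) (c : ℤ)
  rw [hχ', smul_mul_smul_comm]
  have hexp : rescale (((c * m : ℕ)) : ℂ) (exp ℂ) * rescale (((d * m * b : ℕ)) : ℂ) (exp ℂ)
      = rescale (((b * d + c : ℕ) : ℂ) * ((m : ℕ) : ℂ)) (exp ℂ) := by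
    rw [exp_mul_exp_eq_exp_add]
    congr 1
    push_cast
    ring
  rw [hexp]
  congr 1
  rw [← pow_mul]
  have hsign : (-1 : ℂ) ^ (b * d + c) = (-1 : ℂ) ^ c * (-1 : ℂ) ^ b := by
    rw [pow_add, mul_comm b d, pow_mul, hd.neg_one_pow, mul_comm]
  rw [hsign]
  rw [show m * (b * d + c) = c * m + d * m * b by ring, pow_add]
  ring

lemma constantCoeff_Gd (ξ : ℂ) (m : ℕ) : constantCoeff (Gd ξ m) = ξ ^ m + 1 := by
  unfold Gd
  simp [constantCoeff_rescale]

lemma rescale_Egf (d : ℕ) (χ : ℤ → ℂ) (ξ x : ℂ) (m : ℕ)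
    (h : ξ ^ (d * m) + 1 ≠ 0) :
    rescale ((m : ℕ) : ℂ) (Egf d χ (ξ ^ m) x)
      = 2 * rescale (x * ((m : ℕ) : ℂ)) (exp ℂ) * (Gd ξ (d * m))⁻¹ * Sd d χ ξ m := by
  unfold Egf
  rw [map_mul, map_mul, map_mul]
  have h2 : rescale ((m : ℕ) : ℂ) (2 : PowerSeries ℂ) = 2 := by
    ext n
    rw [coeff_rescale]
    rcases Nat.eq_zero_or_pos n with hn | hn
    · simp [hn]
    · rw [show (2 : PowerSeries ℂ) = C 2 by simp [map_ofNat], coeff_C,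
        if_neg hn.ne', mul_zero]
  have hG : rescale ((m : ℕ) : ℂ) ((ξ ^ m) ^ d • rescale ((d : ℕ) : ℂ) (exp ℂ) + 1)
      = Gd ξ (d * m) := by
    rw [map_add, map_one, rescale_smul, rescale_rescale]
    unfold Gd
    rw [← pow_mul]
    congr 2
    · ring
    · push_cast; ring
  have hGc : constantCoeff ((ξ ^ m) ^ d • rescale ((d : ℕ) : ℂ) (exp ℂ) + 1) ≠ 0 := by
    rw [map_add, map_one, smul_eq_C_mul, map_mul, constantCoeff_C,
      constantCoeff_rescale, constantCoeff_exp]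
    simpa [← pow_mul, mul_comm m d] using h
  have hinv : rescale ((m : ℕ) : ℂ) (((ξ ^ m) ^ d • rescale ((d : ℕ) : ℂ) (exp ℂ) + 1)⁻¹)
      = (Gd ξ (d * m))⁻¹ := by
    rw [rescale_inv _ _ hGc, hG]
  have hS : rescale ((m : ℕ) : ℂ)
      (∑ a ∈ Finset.range d, ((-1 : ℂ) ^ a * χ a * (ξ ^ m) ^ a) • rescale ((a : ℕ) : ℂ) (exp ℂ))
      = Sd d χ ξ m := by
    rw [map_sum]
    unfold Sd
    refine Finset.sum_congr rfl fun a _ => ?_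
    rw [rescale_smul, rescale_rescale, ← pow_mul]
    congr 2
    · ring
    · push_cast; ring
  rw [h2, hinv, hS, rescale_rescale]

lemma coeff_Tgf (m : ℕ) (χ : ℤ → ℂ) (ζ : ℂ) (l : ℕ) :
    coeff l (Tgf m χ ζ) = T m χ ζ l / (l.factorial : ℂ) := by
  unfold Tgf T
  rw [map_sum, Finset.sum_div]
  refine Finset.sum_congr rfl fun a _ => ?_
  rw [LinearMap.map_smul, smul_eq_mul, coeff_rescale, coeff_exp]
  push_cast
  ring

lemma coeff_Egf (d : ℕ) (χ : ℤ → ℂ) (ζ x : ℂ) (k : ℕ) :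
    coeff k (Egf d χ ζ x) = E d χ ζ x k / (k.factorial : ℂ) := by
  unfold E
  rw [eq_div_iff (by exact_mod_cast Nat.factorial_ne_zero k : (k.factorial : ℂ) ≠ 0)]
  ring

noncomputable def P (d : ℕ) (χ : ℤ → ℂ) (ξ : ℂ) (y₁ : ℂ) (u v w : ℕ) : PowerSeries ℂ :=
  rescale (((v * w : ℕ)) : ℂ) (Egf d χ (ξ ^ (v * w)) ((u : ℂ) * y₁)) *
    (rescale (((u * w : ℕ)) : ℂ) (Tgf (v * d - 1) χ (ξ ^ (u * w))) *
      rescale (((u * v : ℕ)) : ℂ) (Tgf (w * d - 1) χ (ξ ^ (u * v))))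

lemma S_eq_coeff (d : ℕ) (χ : ℤ → ℂ) (ξ : ℂ) (n : ℕ) (y₁ : ℂ) (u v w : ℕ) :
    S d χ ξ n y₁ u v w = (n.factorial : ℂ) * coeff n (P d χ ξ y₁ u v w) := by
  unfold P S
  rw [coeff_mul, Finset.Nat.sum_antidiagonal_eq_sum_range_succ_mk, Finset.mul_sum]
  refine Finset.sum_congr rfl fun k hk => ?_
  rw [coeff_mul, Finset.Nat.sum_antidiagonal_eq_sum_range_succ_mk, Finset.mul_sum,
    Finset.mul_sum]
  have hk' : k ≤ n := Nat.lt_succ_iff.mp (Finset.mem_range.mp hk)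
  rw [show n + 1 - k = n - k + 1 from by omega]
  refine Finset.sum_congr rfl fun l hl => ?_
  have hl' : l ≤ n - k := Nat.lt_succ_iff.mp (Finset.mem_range.mp hl)
  rw [coeff_rescale, coeff_rescale, coeff_rescale, coeff_Egf, coeff_Tgf, coeff_Tgf]
  have e1 : (k.factorial : ℂ) ≠ 0 := by exact_mod_cast Nat.factorial_ne_zero k
  have e2 : (l.factorial : ℂ) ≠ 0 := by exact_mod_cast Nat.factorial_ne_zero l
  have e3 : ((n - k - l).factorial : ℂ) ≠ 0 := by
    exact_mod_cast Nat.factorial_ne_zero (n - k - l)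
  have hm : l + (n - k - l) = n - k := by omega
  have hkm : k + (n - k - l) = n - l := by omega
  have hkl : k + l ≤ n := by omega
  push_cast
  field_simp
  ring_nf

lemma Geo_eq (ξ : ℂ) (v M : ℕ) (hv : Odd v) (h : ξ ^ M + 1 ≠ 0) :
    Geo ξ v M = (Gd ξ M)⁻¹ * Gd ξ (M * v) := by
  rw [← Gd_mul_Geo ξ M v hv, ← mul_assoc,
    PowerSeries.inv_mul_cancel _ (by rw [constantCoeff_Gd]; exact h), one_mul]

noncomputable def Q (d : ℕ) (χ : ℤ → ℂ) (ξ : ℂ) (y₁ : ℂ) (u v w : ℕ) : PowerSeries ℂ :=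
  2 * rescale ((((u * v * w : ℕ)) : ℂ) * y₁) (exp ℂ) *
    (Gd ξ (d * (v * w)))⁻¹ * Sd d χ ξ (v * w) *
    (Sd d χ ξ (u * w) * ((Gd ξ (d * (u * w)))⁻¹ * Gd ξ (d * (u * v * w)))) *
    (Sd d χ ξ (u * v) * ((Gd ξ (d * (u * v)))⁻¹ * Gd ξ (d * (u * v * w))))

lemma P_eq (d : ℕ) (χ : ℤ → ℂ) (ξ : ℂ) (y₁ : ℂ) (u v w : ℕ)
    (hd : Odd d) (hd0 : 0 < d) (hχ : Function.Periodic χ (d : ℤ))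
    (hv : Odd v) (hw : Odd w) (hv0 : 0 < v) (hw0 : 0 < w)
    (h1 : ξ ^ (d * (v * w)) + 1 ≠ 0) (h2 : ξ ^ (d * (u * w)) + 1 ≠ 0)
    (h3 : ξ ^ (d * (u * v)) + 1 ≠ 0) :
    P d χ ξ y₁ u v w = Q d χ ξ y₁ u v w := by
  unfold P
  rw [rescale_Egf d χ ξ ((u : ℂ) * y₁) (v * w) h1,
    rescale_Tgf d χ ξ hd hd0 hχ (u * w) v hv0,
    rescale_Tgf d χ ξ hd hd0 hχ (u * v) w hw0,
    Geo_eq ξ v (d * (u * w)) hv h2,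
    Geo_eq ξ w (d * (u * v)) hw h3]
  unfold Q
  rw [show (u : ℂ) * y₁ * (((v * w : ℕ)) : ℂ) = (((u * v * w : ℕ)) : ℂ) * y₁ by
    push_cast; ring,
    show d * (u * w) * v = d * (u * v * w) by ring,
    show d * (u * v) * w = d * (u * v * w) by ring]
  ring

lemma Q_cyc (d : ℕ) (χ : ℤ → ℂ) (ξ : ℂ) (y₁ : ℂ) (u v w : ℕ) :
    Q d χ ξ y₁ u v w = Q d χ ξ y₁ v w u := by
  unfold Q
  rw [show w * u = u * w by ring, show v * u = u * v by ring,
    show v * w * u = u * v * w by ring]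
  ring


/-- Theorem 4: the three cyclic shifts of the expression coincide. -/
theorem theorem4 (d w₁ w₂ w₃ : ℕ) (hd : Odd d) (hd0 : 0 < d)
    (hw₁ : Odd w₁) (hw₂ : Odd w₂) (hw₃ : Odd w₃)
    (hw₁0 : 0 < w₁) (hw₂0 : 0 < w₂) (hw₃0 : 0 < w₃)
    (χ : ℤ → ℂ) (hχ : Function.Periodic χ (d : ℤ)) (ξ : ℂ)
    (hξ₁ : ξ ^ (d * w₂ * w₃) + 1 ≠ 0) (hξ₂ : ξ ^ (d * w₁ * w₃) + 1 ≠ 0)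
    (hξ₃ : ξ ^ (d * w₁ * w₂) + 1 ≠ 0)
    (n : ℕ) (y₁ : ℂ) :
    S d χ ξ n y₁ w₁ w₂ w₃ = S d χ ξ n y₁ w₂ w₃ w₁ ∧
      S d χ ξ n y₁ w₂ w₃ w₁ = S d χ ξ n y₁ w₃ w₁ w₂ := by
  have e23 : ξ ^ (d * (w₂ * w₃)) + 1 ≠ 0 := by rwa [← mul_assoc]
  have e13 : ξ ^ (d * (w₁ * w₃)) + 1 ≠ 0 := by rwa [← mul_assoc]
  have e12 : ξ ^ (d * (w₁ * w₂)) + 1 ≠ 0 := by rwa [← mul_assoc]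
  have e31 : ξ ^ (d * (w₃ * w₁)) + 1 ≠ 0 := by
    rwa [show d * (w₃ * w₁) = d * (w₁ * w₃) by ring]
  have e21 : ξ ^ (d * (w₂ * w₁)) + 1 ≠ 0 := by
    rwa [show d * (w₂ * w₁) = d * (w₁ * w₂) by ring]
  have e32 : ξ ^ (d * (w₃ * w₂)) + 1 ≠ 0 := by
    rwa [show d * (w₃ * w₂) = d * (w₂ * w₃) by ring]
  have key : ∀ u v w : ℕ, Odd v → Odd w → 0 < v → 0 < w →
      ξ ^ (d * (v * w)) + 1 ≠ 0 → ξ ^ (d * (u * w)) + 1 ≠ 0 →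
      ξ ^ (d * (u * v)) + 1 ≠ 0 →
      S d χ ξ n y₁ u v w = (n.factorial : ℂ) * coeff n (Q d χ ξ y₁ u v w) := by
    intro u v w hv hw hv0 hw0 h1 h2 h3
    rw [S_eq_coeff, P_eq d χ ξ y₁ u v w hd hd0 hχ hv hw hv0 hw0 h1 h2 h3]
  have k1 := key w₁ w₂ w₃ hw₂ hw₃ hw₂0 hw₃0 e23 e13 e12
  have k2 := key w₂ w₃ w₁ hw₃ hw₁ hw₃0 hw₁0 e31 e21 e23
  have k3 := key w₃ w₁ w₂ hw₁ hw₂ hw₁0 hw₂0 e12 e32 e31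
  constructor
  · rw [k1, k2, Q_cyc]
  · rw [k2, k3, Q_cyc]
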